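/- Consider the discrete-time Markov chain on ℕ × ℕ whose transition kernel is: from a state (x,0) it moves to (x+1,1) with probability 1; from a state (x,1) it moves to (x+1,2) with probability 1/(x+1) and to (x,0) with probability x/(x+1); every state (x,y) with y ≥ 2 is absorbing. Then for every k₀ ∈ ℕ with k₀ ≥ 1, under the trajectory law of this chain started at (k₀,0), the event {there exists n with second coordinate of X_n at least 2} has probability 1. -/

import Mathlib

open MeasureTheory ENNReal
open scoped ENNReal

/-- Transition probabilities of the boundary-layer chain of CRN1 on `ℕ × ℕ`:
from `(x,0)` to `(x+1,1)` with probability `1`; from `(x,1)` to `(x+1,2)` with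
probability `1/(x+1)` and to `(x,0)` with probability `x/(x+1)`; every state
`(x,y)` with `y ≥ 2` is absorbing. -/
noncomputable def pCRN1 (s t : ℕ × ℕ) : ℝ≥0∞ :=
  if s.2 = 0 then (if t = (s.1 + 1, 1) then 1 else 0)
  else if s.2 = 1 then
    (if t = (s.1 + 1, 2) then 1 / ((s.1 : ℝ≥0∞) + 1) else 0)
      + (if t = (s.1, 0) then (s.1 : ℝ≥0∞) / ((s.1 : ℝ≥0∞) + 1) else 0)
  else (if t = s then 1 else 0)

/-- `μ` is the trajectory law (Ionescu–Tulcea law) on `(ℕ×ℕ)^ℕ` of the Markov chain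
with one-step transition probabilities `p` started at `s₀`: it is a probability
measure whose finite-dimensional cylinder probabilities are prescribed by `p` and
the point mass at `s₀`. -/
def IsTrajLaw (p : ℕ × ℕ → ℕ × ℕ → ℝ≥0∞) (s₀ : ℕ × ℕ)
    (μ : Measure (ℕ → ℕ × ℕ)) : Prop :=
  IsProbabilityMeasure μ ∧
  μ {ω | ω 0 = s₀} = 1 ∧
  ∀ (n : ℕ) (f : ℕ → ℕ × ℕ),
    μ {ω | ∀ i ≤ n + 1, ω i = f i} = μ {ω | ∀ i ≤ n, ω i = f i} * p (f n) (f (n + 1))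

/-- The canonical "never escaping" path of the chain started at `(k₀,0)`. -/
def gpath (k₀ : ℕ) (n : ℕ) : ℕ × ℕ :=
  if n % 2 = 0 then (k₀ + n / 2, 0) else (k₀ + n / 2 + 1, 1)

lemma gpath_even (k₀ m : ℕ) : gpath k₀ (2 * m) = (k₀ + m, 0) := by
  have h1 : (2 * m) % 2 = 0 := by omega
  have h2 : (2 * m) / 2 = m := by omega
  simp [gpath, h1, h2]

lemma gpath_odd (k₀ m : ℕ) : gpath k₀ (2 * m + 1) = (k₀ + m + 1, 1) := by
  have h1 : (2 * m + 1) % 2 = 1 := by omega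
  have h2 : (2 * m + 1) / 2 = m := by omega
  simp [gpath, h1, h2]

/-- Any one-step transition out of `gpath k₀ N` staying in the strip other than
the canonical one has probability `0`. -/
lemma pCRN1_gpath_ne (k₀ N : ℕ) (t : ℕ × ℕ) (ht : t.2 ≤ 1)
    (hne : t ≠ gpath k₀ (N + 1)) : pCRN1 (gpath k₀ N) t = 0 := by
  rcases Nat.even_or_odd N with ⟨m, hm⟩ | ⟨m, hm⟩
  · have hN : N = 2 * m := by omega
    subst hN
    rw [gpath_even] at *
    have hg : gpath k₀ (2 * m + 1) = (k₀ + m + 1, 1) := gpath_odd k₀ m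
    rw [hg] at hne
    simp only [pCRN1, if_pos rfl]
    exact if_neg hne
  · have hN : N = 2 * m + 1 := by omega
    subst hN
    rw [gpath_odd]
    have hg : gpath k₀ (2 * m + 1 + 1) = (k₀ + m + 1, 0) := by
      have : 2 * m + 1 + 1 = 2 * (m + 1) := by omega
      rw [this, gpath_even]
      simp [Nat.add_assoc]
    rw [hg] at hne
    have h2 : t ≠ ((k₀ + m + 1) + 1, 2) := by
      intro h; rw [h] at ht; simp at ht
    simp only [pCRN1]
    norm_num
    exact ⟨h2, hne⟩

theorem stmt5 (k₀ : ℕ) (hk : 1 ≤ k₀) :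
    ∀ μ : Measure (ℕ → ℕ × ℕ), IsTrajLaw pCRN1 (k₀, 0) μ →
      μ {ω | ∃ n : ℕ, 2 ≤ (ω n).2} = 1 := by
  intro μ hμ
  obtain ⟨hprob, h0, hstep⟩ := hμ
  haveI := hprob
  set g := gpath k₀ with hgdef
  set C : ℕ → Set (ℕ → ℕ × ℕ) := fun N => {ω | ∀ i ≤ N, ω i = g i} with hCdef
  set A : ℕ → Set (ℕ → ℕ × ℕ) := fun N => {ω | ∀ i ≤ N, (ω i).2 ≤ 1} with hAdef
  -- initial cylinder
  have hg0 : g 0 = (k₀, 0) := by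
    have := gpath_even k₀ 0
    simpa using this
  have hC0 : μ (C 0) = 1 := by
    have hset : C 0 = {ω : ℕ → ℕ × ℕ | ω 0 = (k₀, 0)} := by
      ext ω; simp [hCdef, Nat.le_zero, hg0]
    rw [hset, h0]
  -- the start-state constraint a.s.
  have hmeas0 : MeasurableSet {ω : ℕ → ℕ × ℕ | ω 0 = (k₀, 0)} := by
    have hpre : {ω : ℕ → ℕ × ℕ | ω 0 = (k₀, 0)} =
        (fun ω : ℕ → ℕ × ℕ => ω 0) ⁻¹' {((k₀, 0) : ℕ × ℕ)} := rfl
    rw [hpre]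
    exact (measurable_pi_apply 0) (measurableSet_singleton _)
  have hcompl0 : μ {ω : ℕ → ℕ × ℕ | ω 0 = (k₀, 0)}ᶜ = 0 := by
    rw [measure_compl hmeas0 (measure_ne_top μ _), measure_univ, h0, tsub_self]
  -- cylinder recursion along g
  have hCstep : ∀ N, μ (C (N + 1)) = μ (C N) * pCRN1 (g N) (g (N + 1)) :=
    fun N => hstep N g
  have hne0 : ∀ a b : ℝ≥0∞, b ≠ 0 → a + b ≠ 0 := by
    intro a b hb h
    rw [add_eq_zero] at h
    exact hb h.2
  -- bound on cylinder measures
  have hCbound : ∀ m : ℕ, μ (C (2 * m)) ≤ ((k₀ : ℝ≥0∞) + 1) / ((k₀ : ℝ≥0∞) + m + 1) := by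
    intro m
    induction m with
    | zero =>
      simp only [Nat.mul_zero, hC0, Nat.cast_zero, add_zero]
      rw [ENNReal.div_self (hne0 _ _ one_ne_zero) (by finiteness)]
    | succ m ih =>
      have h1 : g (2 * m) = (k₀ + m, 0) := gpath_even k₀ m
      have h2 : g (2 * m + 1) = (k₀ + m + 1, 1) := gpath_odd k₀ m
      have h3 : g (2 * m + 1 + 1) = (k₀ + m + 1, 0) := by
        have : 2 * m + 1 + 1 = 2 * (m + 1) := by omega
        rw [hgdef, this, gpath_even]; simp [Nat.add_assoc]
      have hp1 : pCRN1 (g (2 * m)) (g (2 * m + 1)) = 1 := by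
        rw [h1, h2]; simp [pCRN1]
      have hp2 : pCRN1 (g (2 * m + 1)) (g (2 * m + 1 + 1)) =
          ((k₀ : ℝ≥0∞) + m + 1) / ((k₀ : ℝ≥0∞) + m + 2) := by
        rw [h2, h3]
        simp only [pCRN1]
        norm_num
        push_cast
        congr 1
        ring
      have heq : μ (C (2 * (m + 1))) =
          μ (C (2 * m)) * (((k₀ : ℝ≥0∞) + m + 1) / ((k₀ : ℝ≥0∞) + m + 2)) := by
        have h2m : 2 * (m + 1) = 2 * m + 1 + 1 := by omega
        rw [h2m, hCstep (2 * m + 1), hCstep (2 * m), hp1, hp2, mul_one]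
      rw [heq]
      calc μ (C (2 * m)) * (((k₀ : ℝ≥0∞) + m + 1) / ((k₀ : ℝ≥0∞) + m + 2))
          ≤ (((k₀ : ℝ≥0∞) + 1) / ((k₀ : ℝ≥0∞) + m + 1)) *
            (((k₀ : ℝ≥0∞) + m + 1) / ((k₀ : ℝ≥0∞) + m + 2)) :=
            by gcongr
        _ = (((k₀ : ℝ≥0∞) + 1) / ((k₀ : ℝ≥0∞) + m + 2)) *
            (((k₀ : ℝ≥0∞) + m + 1) / ((k₀ : ℝ≥0∞) + m + 1)) := by
            simp only [div_eq_mul_inv]; ring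
        _ = ((k₀ : ℝ≥0∞) + 1) / ((k₀ : ℝ≥0∞) + m + 2) := by
            rw [ENNReal.div_self (hne0 _ _ one_ne_zero) (by finiteness), mul_one]
        _ = ((k₀ : ℝ≥0∞) + (m + 1 : ℕ) + 1) / ((k₀ : ℝ≥0∞) + (m + 1 : ℕ) + 1) *
              (((k₀ : ℝ≥0∞) + 1) / ((k₀ : ℝ≥0∞) + (m + 1 : ℕ) + 1)) := by
              rw [ENNReal.div_self (hne0 _ _ one_ne_zero) (by finiteness), one_mul]
              push_cast; ring_nf
        _ = ((k₀ : ℝ≥0∞) + (m + 1 : ℕ) + 1) / ((k₀ : ℝ≥0∞) + (m + 1 : ℕ) + 1) *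
              (((k₀ : ℝ≥0∞) + 1) / ((k₀ : ℝ≥0∞) + (m + 1 : ℕ) + 1)) := rfl
        _ = ((k₀ : ℝ≥0∞) + 1) / ((k₀ : ℝ≥0∞) + (m + 1 : ℕ) + 1) := by
              rw [ENNReal.div_self (hne0 _ _ one_ne_zero) (by finiteness), one_mul]
  -- deviations from the canonical path are null
  have hnull : ∀ N, μ (A N \ C N) = 0 := by
    intro N
    induction N with
    | zero =>
      refine le_antisymm ?_ zero_le
      calc μ (A 0 \ C 0) ≤ μ {ω : ℕ → ℕ × ℕ | ω 0 = (k₀, 0)}ᶜ := by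
            apply measure_mono
            intro ω ⟨_, hω⟩ h
            exact hω (fun i hi => by interval_cases i; simpa [hg0] using h)
        _ = 0 := hcompl0
    | succ N ih =>
      refine le_antisymm ?_ zero_le
      have hsub : A (N + 1) \ C (N + 1) ⊆ (A N \ C N) ∪
          ⋃ t : ℕ × ℕ, {ω | (∀ i ≤ N, ω i = g i) ∧ ω (N + 1) = t ∧
            t.2 ≤ 1 ∧ t ≠ g (N + 1)} := by
        intro ω ⟨hA1, hC1⟩
        by_cases hCN : ∀ i ≤ N, ω i = g i
        · right
          refine Set.mem_iUnion.2 ⟨ω (N + 1), hCN, rfl, hA1 (N + 1) le_rfl, ?_⟩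
          intro h
          refine hC1 (fun i hi => ?_)
          rcases Nat.lt_or_ge i (N + 1) with h' | h'
          · exact hCN i (Nat.lt_succ_iff.mp h')
          · have hi' : i = N + 1 := le_antisymm hi h'
            rw [hi', h]
        · left
          exact ⟨fun i hi => hA1 i (le_trans hi (Nat.le_succ N)), hCN⟩
      have hterm : ∀ t : ℕ × ℕ,
          μ {ω : ℕ → ℕ × ℕ | (∀ i ≤ N, ω i = g i) ∧ ω (N + 1) = t ∧
            t.2 ≤ 1 ∧ t ≠ g (N + 1)} = 0 := by
        intro t
        by_cases ht : t.2 ≤ 1 ∧ t ≠ g (N + 1)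
        · set f : ℕ → ℕ × ℕ := Function.update g (N + 1) t with hfdef
          have hfle : ∀ i ≤ N, f i = g i := by
            intro i hi
            exact Function.update_of_ne (by omega) _ _
          have hfN1 : f (N + 1) = t := Function.update_self _ _ _
          have hset : {ω : ℕ → ℕ × ℕ | (∀ i ≤ N, ω i = g i) ∧ ω (N + 1) = t ∧
              t.2 ≤ 1 ∧ t ≠ g (N + 1)} = {ω | ∀ i ≤ N + 1, ω i = f i} := by
            ext ω
            constructor
            · rintro ⟨h1, h2, -, -⟩ i hi
              rcases Nat.lt_or_ge i (N + 1) with h' | h'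
              · rw [hfle i (Nat.lt_succ_iff.mp h')]
                exact h1 i (Nat.lt_succ_iff.mp h')
              · have hi' : i = N + 1 := le_antisymm hi h'
                rw [hi', hfN1]
                exact h2
            · intro h
              refine ⟨fun i hi => (h i (le_trans hi (Nat.le_succ N))).trans (hfle i hi),
                (h (N + 1) le_rfl).trans hfN1, ht.1, ht.2⟩
          rw [hset, hstep N f]
          have : pCRN1 (f N) (f (N + 1)) = 0 := by
            rw [hfle N le_rfl, hfN1]
            exact pCRN1_gpath_ne k₀ N t ht.1 ht.2
          rw [this, mul_zero]
        · have : {ω : ℕ → ℕ × ℕ | (∀ i ≤ N, ω i = g i) ∧ ω (N + 1) = t ∧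
              t.2 ≤ 1 ∧ t ≠ g (N + 1)} = ∅ := by
            ext ω; simp only [Set.mem_setOf_eq, Set.mem_empty_iff_false, iff_false]
            rintro ⟨-, -, h1, h2⟩; exact ht ⟨h1, h2⟩
          rw [this, measure_empty]
      calc μ (A (N + 1) \ C (N + 1)) ≤
          μ ((A N \ C N) ∪ ⋃ t : ℕ × ℕ, {ω : ℕ → ℕ × ℕ | (∀ i ≤ N, ω i = g i) ∧
            ω (N + 1) = t ∧ t.2 ≤ 1 ∧ t ≠ g (N + 1)}) := measure_mono hsub
        _ ≤ μ (A N \ C N) + μ (⋃ t : ℕ × ℕ, {ω : ℕ → ℕ × ℕ | (∀ i ≤ N, ω i = g i) ∧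
            ω (N + 1) = t ∧ t.2 ≤ 1 ∧ t ≠ g (N + 1)}) := measure_union_le _ _
        _ ≤ 0 + ∑' t : ℕ × ℕ, μ {ω : ℕ → ℕ × ℕ | (∀ i ≤ N, ω i = g i) ∧
            ω (N + 1) = t ∧ t.2 ≤ 1 ∧ t ≠ g (N + 1)} := by
            rw [ih]; exact add_le_add le_rfl (measure_iUnion_le _)
        _ = 0 := by simp [hterm]
  -- the strip event has measure 0
  set E : Set (ℕ → ℕ × ℕ) := {ω | ∃ n : ℕ, 2 ≤ (ω n).2} with hEdef
  have hEc : Eᶜ = {ω : ℕ → ℕ × ℕ | ∀ n, (ω n).2 ≤ 1} := by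
    ext ω
    simp only [hEdef, Set.mem_compl_iff, Set.mem_setOf_eq, not_exists, not_le]
    exact ⟨fun h n => Nat.lt_succ_iff.mp (h n), fun h n => Nat.lt_succ_iff.mpr (h n)⟩
  have hEcle : ∀ m : ℕ, μ Eᶜ ≤ ((k₀ : ℝ≥0∞) + 1) / ((k₀ : ℝ≥0∞) + m + 1) := by
    intro m
    have hsub : Eᶜ ⊆ A (2 * m) := by
      rw [hEc]; intro ω hω i _; exact hω i
    calc μ Eᶜ ≤ μ (A (2 * m)) := measure_mono hsub
      _ ≤ μ (C (2 * m)) + μ (A (2 * m) \ C (2 * m)) := by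
          refine le_trans (measure_mono ?_) (measure_union_le _ _)
          intro ω hω
          by_cases h : ω ∈ C (2 * m)
          · exact Or.inl h
          · exact Or.inr ⟨hω, h⟩
      _ = μ (C (2 * m)) := by rw [hnull, add_zero]
      _ ≤ ((k₀ : ℝ≥0∞) + 1) / ((k₀ : ℝ≥0∞) + m + 1) := hCbound m
  have hEc0 : μ Eᶜ = 0 := by
    have htend : Filter.Tendsto (fun m : ℕ => ((k₀ : ℝ≥0∞) + 1) * ((m : ℝ≥0∞))⁻¹)
        Filter.atTop (nhds 0) := by
      have := ENNReal.Tendsto.const_mul (ENNReal.tendsto_inv_nat_nhds_zero)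
        (Or.inr (by finiteness : ((k₀ : ℝ≥0∞) + 1) ≠ ⊤))
      simpa using this
    have hle : ∀ m : ℕ, μ Eᶜ ≤ ((k₀ : ℝ≥0∞) + 1) * ((m : ℝ≥0∞))⁻¹ := by
      intro m
      refine le_trans (hEcle m) ?_
      rw [← div_eq_mul_inv]
      have hmle : (m : ℝ≥0∞) ≤ (k₀ : ℝ≥0∞) + m + 1 :=
        le_trans le_add_self (le_trans le_self_add le_rfl)
      exact ENNReal.div_le_div_left hmle _
    have := ge_of_tendsto' htend hle
    exact le_antisymm (by simpa using this) zero_le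
  have huniv : (1 : ℝ≥0∞) = μ Set.univ := measure_univ.symm
  have h1le : (1 : ℝ≥0∞) ≤ μ E := by
    calc (1 : ℝ≥0∞) = μ Set.univ := huniv
      _ = μ (E ∪ Eᶜ) := by rw [Set.union_compl_self]
      _ ≤ μ E + μ Eᶜ := measure_union_le _ _
      _ = μ E := by rw [hEc0, add_zero]
  exact le_antisymm prob_le_one h1le
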